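/- For every integer $n \geq 1$ there exists a distribution $D$ supported on two points of $\mathbb{R} \times \mathbb{R}$ (with inputs in any fixed open ball around $0$) such that the least-squares linear learner without intercept, $A(S) = \arg\min_h \frac{1}{|S|}\sum_{(x,y)\in S}(xh-y)^2$ (minimum-norm solution when underdetermined), satisfies $\mathbb{E}_{S_{n+1}\sim D^{n+1}} R_D(A(S_{n+1})) > \mathbb{E}_{S_n \sim D^n} R_D(A(S_n))$, where $R_D(h) = \mathbb{E}_{(x,y)\sim D}(xh - y)^2$. -/

import Mathlib

set_option maxHeartbeats 1000000

open MeasureTheory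
open scoped ENNReal Classical

set_option linter.unusedSectionVars false
set_option linter.unusedVariables false

lemma pi_mixture {α : Type*} [MeasurableSpace α] (m : ℕ) (u v : ℝ≥0∞) (hu : u ≠ ∞) (hv : v ≠ ∞) (s t : α) :
    Measure.pi (fun _ : Fin m => u • Measure.dirac s + v • Measure.dirac t)
      = ∑ σ : Fin m → Bool,
          (∏ i, (if σ i then u else v)) • Measure.dirac (fun i => if σ i then s else t) := by
  haveI : IsFiniteMeasure (u • Measure.dirac s + v • Measure.dirac t) := by
    constructor
    rw [Measure.add_apply, Measure.smul_apply, Measure.smul_apply]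
    simp [lt_top_iff_ne_top, ENNReal.add_ne_top, hu, hv]
  refine Measure.pi_eq ?_
  intro E hE
  rw [Measure.finset_sum_apply]
  have hEm : MeasurableSet (Set.pi Set.univ E) := MeasurableSet.univ_pi hE
  have h1 : ∀ σ : Fin m → Bool,
      ((∏ i, (if σ i then u else v)) • Measure.dirac (fun i => if σ i then s else t))
        (Set.pi Set.univ E)
      = ∏ i, ((if σ i then u else v) * (if (if σ i then s else t) ∈ E i then 1 else 0)) := by
    intro σ
    rw [Measure.smul_apply, Measure.dirac_apply' _ hEm, smul_eq_mul, Finset.prod_mul_distrib]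
    congr 1
    rw [Finset.prod_boole, Set.indicator_apply]
    simp [Set.mem_univ_pi]
  have h2 : ∀ i : Fin m, (u • Measure.dirac s + v • Measure.dirac t) (E i)
      = ∑ b : Bool, (if b then u else v) * (if (if b then s else t) ∈ E i then 1 else 0) := by
    intro i
    rw [Fintype.sum_bool]
    simp only [if_true, if_false]
    rw [Measure.add_apply, Measure.smul_apply, Measure.smul_apply,
      Measure.dirac_apply' _ (hE i), Measure.dirac_apply' _ (hE i)]
    simp [Set.indicator_apply, mul_comm]
  simp only [h1, h2]
  rw [Fintype.prod_sum]

lemma integrable_dirac' {α : Type*} [MeasurableSpace α] [MeasurableSingletonClass α] {f : α → ℝ} (hf : Measurable f) (a : α) :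
    Integrable f (Measure.dirac a) := by
  refine ⟨hf.aestronglyMeasurable, ?_⟩
  rw [HasFiniteIntegral, lintegral_dirac]
  exact ENNReal.coe_lt_top

lemma integral_two_point {α : Type*} [MeasurableSpace α] [MeasurableSingletonClass α] (u v : ℝ≥0∞) (hu : u ≠ ∞) (hv : v ≠ ∞) (s t : α)
    {f : α → ℝ} (hf : Measurable f) :
    ∫ z, f z ∂(u • Measure.dirac s + v • Measure.dirac t)
      = u.toReal * f s + v.toReal * f t := by
  rw [integral_add_measure
      (((integrable_dirac' hf s).smul_measure hu))
      (((integrable_dirac' hf t).smul_measure hv)),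
    integral_smul_measure, integral_smul_measure, integral_dirac, integral_dirac]
  simp [smul_eq_mul]

lemma integral_dirac_sum {α : Type*} [MeasurableSpace α] [MeasurableSingletonClass α] {ι : Type*} [Fintype ι] (c : ι → ℝ≥0∞) (hc : ∀ i, c i ≠ ∞)
    (p : ι → α) {f : α → ℝ} (hf : Measurable f) :
    ∫ z, f z ∂(∑ i : ι, c i • Measure.dirac (p i))
      = ∑ i : ι, (c i).toReal * f (p i) := by
  rw [integral_finset_sum_measure (fun i _ => (integrable_dirac' hf (p i)).smul_measure (hc i))]
  congr 1
  funext i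
  rw [integral_smul_measure, integral_dirac]
  simp [smul_eq_mul]

noncomputable def phi (a w N k : ℝ) : ℝ :=
  (w*((a-1)*(N-k))^2 + (1-w)*(a*(a-1)*k)^2) / (k*a^2 + (N-k))^2

lemma phi_nonneg {a w N k : ℝ} (hw0 : 0 ≤ w) (hw1 : w ≤ 1) : 0 ≤ phi a w N k := by
  unfold phi
  have h1 : 0 ≤ 1 - w := by linarith
  positivity

-- deficit bound, for 1 ≤ k ≤ x ≤ a, 3 ≤ a
lemma deficit_bound {a w x k : ℝ} (ha : 3 ≤ a) (hw0 : 0 < w) (hw1 : w ≤ 1/2)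
    (hk : 1 ≤ k) (hkx : k ≤ x) (hxa : x ≤ a) :
    w * phi a w (x+1) (k+1) + (1-w) * phi a w (x+1) k - phi a w x k
      ≥ -(3*(a-1)^2/a^4 + w*(w*(a-1)^2+1)) := by
  have hx : 1 ≤ x := le_trans hk hkx
  set d0 : ℝ := k*a^2 + (x-k) with hd0def
  set d1 : ℝ := k*a^2 + (x+1-k) with hd1def
  have hka : (9:ℝ) ≤ k*a^2 := by nlinarith
  have hd0k : k*a^2 ≤ d0 := by rw [hd0def]; nlinarith
  have hd0 : (9:ℝ) ≤ d0 := le_trans hka hd0k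
  have hd1 : d1 = d0 + 1 := by rw [hd0def, hd1def]; ring
  have hd0pos : (0:ℝ) < d0 := by linarith
  have hd1pos : (0:ℝ) < d1 := by rw [hd1]; linarith
  have h1 : 0 ≤ phi a w (x+1) (k+1) := phi_nonneg hw0.le (by linarith)
  -- phi (x+1) k ≤ w*(a-1)^2 + 1
  have h2 : phi a w (x+1) k ≤ w*(a-1)^2 + 1 := by
    unfold phi
    have e : k*a^2 + (x+1-k) = d1 := by rw [hd1def]
    rw [e, div_le_iff₀ (by positivity)]
    have key1 : (a-1)*(x+1-k) ≤ d1 := by rw [hd1def]; nlinarith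
    have key1' : 0 ≤ (a-1)*(x+1-k) := by nlinarith
    have key2 : a*(a-1)*k ≤ d1 := by rw [hd1def]; nlinarith
    have key2' : 0 ≤ a*(a-1)*k := by nlinarith
    nlinarith [sq_nonneg ((a-1)*(x+1-k)), sq_nonneg (a*(a-1)*k),
      mul_le_mul key1 key1 key1' hd1pos.le, mul_le_mul key2 key2 key2' hd1pos.le,
      mul_nonneg hw0.le (sq_nonneg (a-1))]
  -- monotone part: w-term of phi x k ≤ w-term of phi (x+1) k
  have hA : w*((a-1)*(x-k))^2/d0^2 ≤ w*((a-1)*(x+1-k))^2/d1^2 := by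
    rw [div_le_div_iff₀ (by positivity) (by positivity)]
    have key : (x-k)*d1 ≤ (x+1-k)*d0 := by rw [hd1]; nlinarith
    have key0 : 0 ≤ (x-k)*d1 := by nlinarith
    have sq : ((x-k)*d1)^2 ≤ ((x+1-k)*d0)^2 := by
      have := mul_self_le_mul_self key0 key
      nlinarith [this]
    calc w*((a-1)*(x-k))^2*d1^2 = w*(a-1)^2*((x-k)*d1)^2 := by ring
    _ ≤ w*(a-1)^2*((x+1-k)*d0)^2 := by
        have : (0:ℝ) ≤ w*(a-1)^2 := by positivity
        nlinarith
    _ = w*((a-1)*(x+1-k))^2*d0^2 := by ring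
  -- decay part
  have hB : (1-w)*(a*(a-1)*k)^2/d0^2 - (1-w)*(a*(a-1)*k)^2/d1^2 ≤ 3*(a-1)^2/a^4 := by
    have e : (1-w)*(a*(a-1)*k)^2/d0^2 - (1-w)*(a*(a-1)*k)^2/d1^2
        = (1-w)*(a*(a-1)*k)^2 * (d1^2 - d0^2) / (d0^2 * d1^2) := by
      field_simp
    rw [e, div_le_div_iff₀ (by positivity) (by positivity)]
    -- (1-w)*(a(a-1)k)^2*(2d0+1)*a^4 ≤ 3(a-1)^2 d0^2 d1^2
    have hw' : 1 - w ≤ 1 := by linarith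
    have hcube : k^2*a^6 ≤ d0^3 := by
      have ha6 : (0:ℝ) ≤ a^6 := by positivity
      have hk23 : k^2 ≤ k^3 := by nlinarith [sq_nonneg k]
      calc k^2*a^6 ≤ k^3*a^6 := by nlinarith
      _ = (k*a^2)^3 := by ring
      _ ≤ d0^3 := by
          have h0 : (0:ℝ) ≤ k*a^2 := by positivity
          exact pow_le_pow_left₀ h0 hd0k 3
    have h2d : d1^2 - d0^2 = 2*d0 + 1 := by rw [hd1]; ring
    have h3d : 2*d0 + 1 ≤ 3*d0 := by linarith
    have main : (a*(a-1)*k)^2 * (3*d0) * a^4 ≤ 3*(a-1)^2*(d0^2*d1^2) := by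
      have e2 : (a*(a-1)*k)^2 * (3*d0) * a^4 = 3*(a-1)^2*((k^2*a^6)*d0) := by ring
      rw [e2]
      have hd4 : (k^2*a^6)*d0 ≤ d0^3*d0 := by nlinarith
      have hd5 : d0^3*d0 ≤ d0^2*d1^2 := by nlinarith
      nlinarith [sq_nonneg (a-1)]
    have hstep : (1-w)*(a*(a-1)*k)^2 * (d1^2 - d0^2) * a^4
        ≤ (a*(a-1)*k)^2 * (3*d0) * a^4 := by
      rw [h2d]
      have hnn : (0:ℝ) ≤ (a*(a-1)*k)^2 * a^4 := by positivity
      nlinarith [mul_nonneg (mul_nonneg (sq_nonneg (a*(a-1)*k)) hw0.le) (pow_nonneg (by positivity : (0:ℝ) ≤ a) 4)]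
    linarith
  -- assemble
  have hphix : phi a w x k = w*((a-1)*(x-k))^2/d0^2 + (1-w)*(a*(a-1)*k)^2/d0^2 := by
    unfold phi
    rw [← hd0def, add_div]
  have hphix1 : phi a w (x+1) k = w*((a-1)*(x+1-k))^2/d1^2 + (1-w)*(a*(a-1)*k)^2/d1^2 := by
    unfold phi
    rw [← hd1def, add_div]
  have hsplit : phi a w x k - phi a w (x+1) k ≤ 3*(a-1)^2/a^4 := by
    rw [hphix, hphix1]
    have := hA
    linarith
  nlinarith [mul_le_mul_of_nonneg_left h2 hw0.le]

lemma gain_bound {a w x : ℝ} (ha : 3 ≤ a) (hw0 : 0 < w) (hw1 : w ≤ 1/2) (hx : 1 ≤ x) :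
    w * phi a w (x+1) 1 + (1-w) * phi a w (x+1) 0 - phi a w x 0
      ≥ w * ((1-w)*(a-1)^2*a^2/(a^2+x)^2 - w*(a-1)^2) := by
  have hphi0 : phi a w (x+1) 0 = w*(a-1)^2 := by
    unfold phi
    have hx1 : x + 1 ≠ 0 := ne_of_gt (by linarith)
    simp only [zero_mul, zero_add, sub_zero, mul_zero]
    field_simp
    ring
  have hphi0' : phi a w x 0 = w*(a-1)^2 := by
    unfold phi
    have hx1 : x ≠ 0 := ne_of_gt (by linarith)
    simp only [zero_mul, zero_add, sub_zero, mul_zero]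
    field_simp
    ring
  have hden : (1*a^2 + (x+1-1)) = a^2 + x := by ring
  have hphi1 : phi a w (x+1) 1 ≥ (1-w)*(a-1)^2*a^2/(a^2+x)^2 := by
    unfold phi
    rw [hden]
    have hpos : (0:ℝ) < (a^2+x)^2 := by positivity
    rw [ge_iff_le, div_le_div_iff₀ hpos hpos]
    nlinarith [mul_nonneg hw0.le (sq_nonneg ((a-1)*(x+1-1))), sq_nonneg (a*(a-1)*1), hpos]
  nlinarith [hphi1, mul_le_mul_of_nonneg_left hphi1 hw0.le]

-- final numeric inequality
lemma final_numeric {x w P : ℝ} (hx : 1 ≤ x) (hw : w = 1/(1000*x^3))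
    (hP1 : 1 - x*w ≤ P) (hP2 : P ≤ 1) :
    P * (w * ((1-w)*(3*x-1)^2*(3*x)^2/((3*x)^2+x)^2 - w*(3*x-1)^2))
      - (1-P) * (3*(3*x-1)^2/(3*x)^4 + w*(w*(3*x-1)^2+1)) > 0 := by
  have hxpos : (0:ℝ) < x := by linarith
  have hwpos : 0 < w := by rw [hw]; positivity
  have hxw : x*w = 1/(1000*x^2) := by rw [hw]; field_simp
  have hxw1 : x*w ≤ 1/1000 := by
    rw [hxw]
    rw [div_le_div_iff₀ (by positivity) (by norm_num)]
    nlinarith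
  have hw1 : w ≤ 1/1000 := by
    rw [hw]
    rw [div_le_div_iff₀ (by positivity) (by norm_num)]
    nlinarith
  -- gamma lower bound : core := (1-w)*9/(9x+1)^2 - w ≥ 8891/(100000 x^2), note a^2/(a^2+x)^2 = 9/(9x+1)^2
  have hrw : (3*x-1)^2*(3*x)^2/((3*x)^2+x)^2 = (3*x-1)^2*(9/(9*x+1)^2) := by
    have h9 : ((3*x)^2+x)^2 = x^2*(9*x+1)^2 := by ring
    rw [h9]
    field_simp
    ring
  have hcore : (1-w)*(9/(9*x+1)^2) - w ≥ 8891/(100000*x^2) := by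
    have h1 : 9/(9*x+1)^2 ≥ 9/(100*x^2) := by
      rw [ge_iff_le, div_le_div_iff₀ (by positivity) (by positivity)]
      nlinarith
    have h2 : (1-w)*(9/(100*x^2)) ≥ (999/1000)*(9/(100*x^2)) := by
      have : (999/1000:ℝ) ≤ 1 - w := by linarith
      have hp : (0:ℝ) ≤ 9/(100*x^2) := by positivity
      nlinarith
    have h3 : w ≤ 100/(100000*x^2) := by
      rw [hw, div_le_div_iff₀ (by positivity) (by positivity)]
      nlinarith [pow_pos hxpos 3, sq_nonneg x, hxpos]
    have e1 : (999/1000:ℝ)*(9/(100*x^2)) = 8991/(100000*x^2) := by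
      field_simp
      ring
    have h4 : (1-w)*(9/(9*x+1)^2) ≥ (1-w)*(9/(100*x^2)) := by
      have : (0:ℝ) ≤ 1 - w := by linarith
      nlinarith [h1]
    have e2 : (8991:ℝ)/(100000*x^2) - 100/(100000*x^2) = 8891/(100000*x^2) := by
      field_simp
      ring
    linarith
  obtain ⟨W, hW⟩ : ∃ W : ℝ, W = w*(3*x-1)^2 := ⟨_, rfl⟩
  have hWpos : 0 < W := by
    rw [hW]
    have : (0:ℝ) < (3*x-1)^2 := by nlinarith
    positivity
  -- gamma full
  have hgam : w * ((1-w)*(3*x-1)^2*(3*x)^2/((3*x)^2+x)^2 - w*(3*x-1)^2)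
      ≥ W * (8891/(100000*x^2)) := by
    have e : w * ((1-w)*(3*x-1)^2*(3*x)^2/((3*x)^2+x)^2 - w*(3*x-1)^2)
        = W * ((1-w)*(9/(9*x+1)^2) - w) := by
      rw [hW]
      have h9 : ((3*x)^2+x)^2 = x^2*(9*x+1)^2 := by ring
      rw [h9]
      field_simp
      ring
    rw [e]
    exact mul_le_mul_of_nonneg_left hcore hWpos.le
  have hgam0 : 0 ≤ w * ((1-w)*(3*x-1)^2*(3*x)^2/((3*x)^2+x)^2 - w*(3*x-1)^2) := by
    have : (0:ℝ) ≤ W * (8891/(100000*x^2)) := by positivity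
    linarith
  have hPlow : (999/1000:ℝ) ≤ P := by linarith
  have hPterm : P * (w * ((1-w)*(3*x-1)^2*(3*x)^2/((3*x)^2+x)^2 - w*(3*x-1)^2))
      ≥ (999/1000) * (W * (8891/(100000*x^2))) := by
    calc P * (w * ((1-w)*(3*x-1)^2*(3*x)^2/((3*x)^2+x)^2 - w*(3*x-1)^2))
        ≥ (999/1000) * (w * ((1-w)*(3*x-1)^2*(3*x)^2/((3*x)^2+x)^2 - w*(3*x-1)^2)) := by
          nlinarith [hgam0, hPlow]
      _ ≥ (999/1000) * (W * (8891/(100000*x^2))) := by nlinarith [hgam]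
  -- Dmax upper bound
  have hDmax : 3*(3*x-1)^2/(3*x)^4 + w*(w*(3*x-1)^2+1) ≤ 0 ∨ True := Or.inr trivial
  have hD1 : (1-P) ≤ x*w := by linarith
  have hDpos : 0 ≤ 3*(3*x-1)^2/(3*x)^4 + w*(w*(3*x-1)^2+1) := by
    have h1 : (0:ℝ) ≤ 3*(3*x-1)^2/(3*x)^4 := by positivity
    have h2 : (0:ℝ) ≤ w*(3*x-1)^2 := by positivity
    nlinarith
  have hDterm : (1-P) * (3*(3*x-1)^2/(3*x)^4 + w*(w*(3*x-1)^2+1))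
      ≤ x*w * (3*(3*x-1)^2/(3*x)^4 + w*(w*(3*x-1)^2+1)) := by
    exact mul_le_mul_of_nonneg_right hD1 hDpos
  -- bound x*w*Dmax
  have hb1 : x*w*(3*(3*x-1)^2/(3*x)^4) = W * (1/(27*x^3)) := by
    rw [hW]
    field_simp
    ring
  have hb1' : W * (1/(27*x^3)) ≤ W * (1/(27*x^2)) := by
    have : (1:ℝ)/(27*x^3) ≤ 1/(27*x^2) := by
      rw [div_le_div_iff₀ (by positivity) (by positivity)]
      nlinarith
    exact mul_le_mul_of_nonneg_left this hWpos.le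
  have hsmall : w*(3*x-1)^2 ≤ 1 := by
    rw [hw]
    rw [div_mul_eq_mul_div, div_le_one (by positivity)]
    nlinarith [pow_pos hxpos 3, sq_nonneg (x-1), hxpos]
  have hb2 : x*w*(w*(w*(3*x-1)^2+1)) ≤ W * (1/(2000*x^2)) := by
    have h1 : w*(3*x-1)^2+1 ≤ 2 := by linarith
    have h2 : x*w*(w*(w*(3*x-1)^2+1)) ≤ x*w*(w*2) := by
      have : w*(w*(3*x-1)^2+1) ≤ w*2 := by nlinarith
      nlinarith [mul_pos hxpos hwpos]
    have h3 : x*w*(w*2) = 2*w/(1000*x^2) := by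
      rw [hw]; field_simp
    have h4 : 2*w/(1000*x^2) ≤ W * (1/(2000*x^2)) := by
      have e : W * (1/(2000*x^2)) = w*(3*x-1)^2/(2000*x^2) := by rw [hW]; ring
      rw [e, div_le_div_iff₀ (by positivity) (by positivity)]
      have h5 : (4:ℝ) ≤ (3*x-1)^2 := by nlinarith
      nlinarith [mul_pos hwpos (by positivity : (0:ℝ) < x^2), sq_nonneg x]
    linarith
  -- combine
  have hRHS : (1-P) * (3*(3*x-1)^2/(3*x)^4 + w*(w*(3*x-1)^2+1))
      ≤ W * (1/(27*x^2)) + W * (1/(2000*x^2)) := by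
    have e : x*w * (3*(3*x-1)^2/(3*x)^4 + w*(w*(3*x-1)^2+1))
        = x*w*(3*(3*x-1)^2/(3*x)^4) + x*w*(w*(w*(3*x-1)^2+1)) := by ring
    rw [e] at hDterm
    linarith [hb1 ▸ hDterm, hb1', hb2]
  have hfin : W * (1/(27*x^2)) + W * (1/(2000*x^2)) < (999/1000) * (W * (8891/(100000*x^2))) := by
    have e1 : W * (1/(27*x^2)) + W * (1/(2000*x^2)) = W * (2027/(54000*x^2)) := by
      field_simp
      ring
    have e2 : (999/1000:ℝ) * (W * (8891/(100000*x^2))) = W * (8882109/(100000000*x^2)) := by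
      field_simp
      ring
    rw [e1, e2]
    have : (2027:ℝ)/(54000*x^2) < 8882109/(100000000*x^2) := by
      rw [div_lt_div_iff₀ (by positivity) (by positivity)]
      nlinarith
    exact mul_lt_mul_of_pos_left this hWpos
  linarith

-- count
def cnt {m : ℕ} (σ : Fin m → Bool) : ℕ := ∑ i, if σ i then 1 else 0

lemma cnt_le {m : ℕ} (σ : Fin m → Bool) : cnt σ ≤ m := by
  unfold cnt
  calc (∑ i, if σ i then 1 else 0) ≤ ∑ _i : Fin m, 1 := by
        apply Finset.sum_le_sum
        intro i _
        split <;> norm_num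
  _ = m := by simp

lemma cnt_pos {m : ℕ} {σ : Fin m → Bool} (h : σ ≠ fun _ => false) : 1 ≤ cnt σ := by
  by_contra hc
  push_neg at hc
  interval_cases h' : cnt σ
  · apply h
    funext i
    by_contra hb
    have hi : σ i = true := by revert hb; cases σ i <;> simp
    have : (1:ℕ) ≤ cnt σ := by
      unfold cnt
      calc (1:ℕ) = ∑ j, if j = i then 1 else 0 := by simp
      _ ≤ ∑ j, if σ j then 1 else 0 := by
          apply Finset.sum_le_sum
          intro j _
          by_cases hj : j = i <;> simp [hj, hi]
    omega

lemma sum_ite_eval {m : ℕ} (σ : Fin m → Bool) (c1 c2 : ℝ) :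
    ∑ i, (if σ i then c1 else c2) = (cnt σ : ℝ) * c1 + ((m : ℝ) - (cnt σ : ℝ)) * c2 := by
  have h : ∀ i, (if σ i then c1 else c2) = c2 + (if σ i then (1:ℝ) else 0) * (c1 - c2) := by
    intro i
    split <;> ring
  rw [Finset.sum_congr rfl fun i _ => h i, Finset.sum_add_distrib, ← Finset.sum_mul]
  have hc : (∑ i, if σ i then (1:ℝ) else 0) = (cnt σ : ℝ) := by
    unfold cnt
    push_cast [apply_ite (Nat.cast : ℕ → ℝ)]
    rfl
  rw [hc]
  simp [Finset.sum_const, Finset.card_univ]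
  ring

lemma risk_eval {a w q κ m : ℝ} (hq : 0 < q) (ha : 1 ≤ a) (hκ0 : 0 ≤ κ) (hκm : κ ≤ m)
    (hm : 1 ≤ m) :
    w*((a*q)*((κ*(a*q)+(m-κ)*q)/(κ*(a*q)^2+(m-κ)*q^2)) - 1)^2
      + (1-w)*(q*((κ*(a*q)+(m-κ)*q)/(κ*(a*q)^2+(m-κ)*q^2)) - 1)^2 = phi a w m κ := by
  have hd : 0 < κ*a^2 + (m-κ) := by
    nlinarith [mul_nonneg hκ0 (by nlinarith : (0:ℝ) ≤ a^2 - 1)]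
  have hden : κ*(a*q)^2+(m-κ)*q^2 = q^2*(κ*a^2+(m-κ)) := by ring
  unfold phi
  rw [hden]
  have hq2 : q^2*(κ*a^2+(m-κ)) ≠ 0 := by positivity
  have hq0 : q ≠ 0 := hq.ne'
  have hd0 : κ*a^2+(m-κ) ≠ 0 := hd.ne'
  set r := (κ*(a*q)+(m-κ)*q)/(q^2*(κ*a^2+(m-κ))) with hr
  have key : r * (q^2*(κ*a^2+(m-κ))) = κ*(a*q)+(m-κ)*q := div_mul_cancel₀ _ hq2
  have hM : q*r*(κ*a^2+(m-κ)) = κ*a+(m-κ) :=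
    mul_left_cancel₀ hq0 (by linear_combination key)
  rw [eq_div_iff (pow_ne_zero 2 hd0)]
  have e : (w*((a*q)*r - 1)^2 + (1-w)*(q*r - 1)^2) * (κ*a^2+(m-κ))^2
      = w*(a*(q*r*(κ*a^2+(m-κ))) - (κ*a^2+(m-κ)))^2
        + (1-w)*(q*r*(κ*a^2+(m-κ)) - (κ*a^2+(m-κ)))^2 := by ring
  rw [e, hM]
  ring

noncomputable def lrn (m : ℕ) (S : Fin m → ℝ × ℝ) : ℝ :=
  if (∑ i, (S i).1 ^ 2) = 0 then 0
  else (∑ i, (S i).1 * (S i).2) / (∑ i, (S i).1 ^ 2)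

lemma lrn_measurable (m : ℕ) : Measurable (lrn m) := by
  unfold lrn
  have h1 : Measurable fun S : Fin m → ℝ × ℝ => ∑ i, (S i).1 ^ 2 :=
    Finset.measurable_sum _ fun i _ => ((measurable_pi_apply i).fst.pow_const 2)
  have h2 : Measurable fun S : Fin m → ℝ × ℝ => ∑ i, (S i).1 * (S i).2 :=
    Finset.measurable_sum _ fun i _ =>
      ((measurable_pi_apply i).fst.mul (measurable_pi_apply i).snd)
  exact Measurable.ite (h1 (measurableSet_singleton 0)) measurable_const (h2.div h1)

lemma E_formula (m : ℕ) (hm : 1 ≤ m) (a q w : ℝ) (hq : 0 < q) (ha : 1 ≤ a)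
    (hw0 : 0 ≤ w) (hw1 : w ≤ 1) :
    ∫ S : Fin m → ℝ × ℝ, (∫ z, (z.1 * lrn m S - z.2) ^ 2
        ∂(ENNReal.ofReal w • Measure.dirac ((a*q, 1) : ℝ×ℝ)
          + ENNReal.ofReal (1-w) • Measure.dirac ((q, 1) : ℝ×ℝ)))
      ∂(Measure.pi fun _ : Fin m =>
          ENNReal.ofReal w • Measure.dirac ((a*q, 1) : ℝ×ℝ)
          + ENNReal.ofReal (1-w) • Measure.dirac ((q, 1) : ℝ×ℝ))
    = ∑ σ : Fin m → Bool, (∏ i, if σ i then w else 1-w) * phi a w m (cnt σ) := by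
  have hw1' : (0:ℝ) ≤ 1 - w := by linarith
  have hinner : ∀ c : ℝ,
      (∫ z, (z.1 * c - z.2) ^ 2
        ∂(ENNReal.ofReal w • Measure.dirac ((a*q, 1) : ℝ×ℝ)
          + ENNReal.ofReal (1-w) • Measure.dirac ((q, 1) : ℝ×ℝ)))
      = w*((a*q)*c-1)^2 + (1-w)*(q*c-1)^2 := by
    intro c
    rw [integral_two_point _ _ ENNReal.ofReal_ne_top ENNReal.ofReal_ne_top _ _ (f := fun z : ℝ×ℝ => (z.1 * c - z.2) ^ 2)
      (((measurable_fst.mul_const c).sub measurable_snd).pow_const 2)]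
    simp [ENNReal.toReal_ofReal, hw0, hw1']
  simp only [hinner]
  rw [pi_mixture m _ _ ENNReal.ofReal_ne_top ENNReal.ofReal_ne_top ((a*q, 1) : ℝ×ℝ) ((q,1) : ℝ×ℝ)]
  have hgmeas : Measurable fun S : Fin m → ℝ×ℝ => w*((a*q)*(lrn m S)-1)^2 + (1-w)*(q*(lrn m S)-1)^2 := by
    have h := lrn_measurable m
    exact ((((h.const_mul (a*q)).sub measurable_const).pow_const 2).const_mul w).add
      ((((h.const_mul q).sub measurable_const).pow_const 2).const_mul (1-w))
  rw [integral_dirac_sum _ (fun σ => by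
      refine ne_of_lt ?_
      refine ENNReal.prod_lt_top ?_
      intro i _
      split <;> exact ENNReal.ofReal_lt_top) _ hgmeas]
  apply Finset.sum_congr rfl
  intro σ _
  have hWeq : (∏ i, if σ i then ENNReal.ofReal w else ENNReal.ofReal (1-w)).toReal
      = ∏ i, if σ i then w else 1-w := by
    rw [ENNReal.toReal_prod]
    apply Finset.prod_congr rfl
    intro i _
    split
    · exact ENNReal.toReal_ofReal hw0
    · exact ENNReal.toReal_ofReal hw1'
  rw [hWeq]
  congr 1
  -- evaluate lrn at the two-point configuration
  set pt : Fin m → ℝ × ℝ := fun i => if σ i then ((a*q, 1) : ℝ×ℝ) else (q, 1) with hpt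
  have hκ0 : (0:ℝ) ≤ (cnt σ : ℝ) := Nat.cast_nonneg _
  have hκm : ((cnt σ : ℝ)) ≤ (m:ℝ) := by exact_mod_cast cnt_le σ
  have hmr : (1:ℝ) ≤ (m:ℝ) := by exact_mod_cast hm
  have hsq : (∑ i, (pt i).1 ^ 2) = (cnt σ : ℝ)*(a*q)^2 + ((m:ℝ) - (cnt σ:ℝ))*q^2 := by
    have : ∀ i, (pt i).1 ^ 2 = (if σ i then (a*q)^2 else q^2) := by
      intro i
      by_cases h : σ i <;> simp [hpt, h]
    rw [Finset.sum_congr rfl fun i _ => this i, sum_ite_eval]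
  have hsxy : (∑ i, (pt i).1 * (pt i).2) = (cnt σ : ℝ)*(a*q) + ((m:ℝ) - (cnt σ:ℝ))*q := by
    have : ∀ i, (pt i).1 * (pt i).2 = (if σ i then (a*q) else q) := by
      intro i
      by_cases h : σ i <;> simp [hpt, h]
    rw [Finset.sum_congr rfl fun i _ => this i, sum_ite_eval]
  have hdpos : (0:ℝ) < (cnt σ : ℝ)*(a*q)^2 + ((m:ℝ) - (cnt σ:ℝ))*q^2 := by
    have h1 : q^2 ≤ (a*q)^2 := by
      nlinarith [mul_nonneg (sq_nonneg q) (by nlinarith : (0:ℝ) ≤ a^2 - 1)]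
    nlinarith [mul_nonneg hκ0 (sub_nonneg.mpr h1), mul_pos hq hq]
  have hlrn : lrn m pt = ((cnt σ : ℝ)*(a*q) + ((m:ℝ) - (cnt σ:ℝ))*q)
      / ((cnt σ : ℝ)*(a*q)^2 + ((m:ℝ) - (cnt σ:ℝ))*q^2) := by
    unfold lrn
    rw [hsq, hsxy, if_neg (ne_of_gt hdpos)]
  rw [hlrn, risk_eval hq ha hκ0 hκm hmr]

theorem stmt_7 (n : ℕ) (hn : 1 ≤ n) (ε : ℝ) (hε : 0 < ε) :
    ∃ s t : ℝ × ℝ, ∃ w : ℝ, 0 < w ∧ w < 1 ∧ |s.1| < ε ∧ |t.1| < ε ∧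
      (let D : Measure (ℝ × ℝ) :=
        ENNReal.ofReal w • Measure.dirac s + ENNReal.ofReal (1 - w) • Measure.dirac t
       let A : (m : ℕ) → (Fin m → ℝ × ℝ) → ℝ := fun m S =>
        if (∑ i, (S i).1 ^ 2) = 0 then 0
        else (∑ i, (S i).1 * (S i).2) / (∑ i, (S i).1 ^ 2)
       (∫ S : Fin n → ℝ × ℝ, (∫ z, (z.1 * A n S - z.2) ^ 2 ∂D)
          ∂(Measure.pi fun _ : Fin n => D))
        < ∫ S : Fin (n + 1) → ℝ × ℝ, (∫ z, (z.1 * A (n + 1) S - z.2) ^ 2 ∂D)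
          ∂(Measure.pi fun _ : Fin (n + 1) => D)) := by
  have hx : (1:ℝ) ≤ (n:ℝ) := by exact_mod_cast hn
  set x : ℝ := (n:ℝ) with hxdef
  have hxpos : (0:ℝ) < x := by linarith
  set a : ℝ := 3*x with hadef
  set q : ℝ := ε/(6*x) with hqdef
  set w : ℝ := 1/(1000*x^3) with hwdef
  have hqpos : 0 < q := by rw [hqdef]; positivity
  have ha1 : (1:ℝ) ≤ a := by rw [hadef]; linarith
  have ha3 : (3:ℝ) ≤ a := by rw [hadef]; linarith
  have hwpos : 0 < w := by rw [hwdef]; positivity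
  have hx3 : (1:ℝ) ≤ x^3 := by nlinarith [sq_nonneg (x-1), mul_nonneg (mul_nonneg hxpos.le hxpos.le) (sub_nonneg.mpr hx), mul_nonneg hxpos.le (sub_nonneg.mpr hx)]
  have hwhalf : w ≤ 1/2 := by
    rw [hwdef, div_le_div_iff₀ (by positivity) (by norm_num)]
    linarith
  have hw1 : w < 1 := by linarith
  refine ⟨(a*q, 1), (q, 1), w, hwpos, hw1, ?_, ?_, ?_⟩
  · show |a*q| < ε
    have : a*q = ε/2 := by
      rw [hadef, hqdef]
      field_simp
      ring
    rw [this, abs_of_pos (by positivity)]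
    linarith
  · show |q| < ε
    rw [abs_of_pos hqpos, hqdef, div_lt_iff₀ (by positivity)]
    nlinarith
  · dsimp only
    have hE1 := E_formula n hn a q w hqpos ha1 hwpos.le hw1.le
    have hE2 := E_formula (n+1) (by omega) a q w hqpos ha1 hwpos.le hw1.le
    show (∫ S : Fin n → ℝ × ℝ, (∫ z, (z.1 * lrn n S - z.2) ^ 2
        ∂(ENNReal.ofReal w • Measure.dirac ((a*q, 1) : ℝ×ℝ)
          + ENNReal.ofReal (1-w) • Measure.dirac ((q, 1) : ℝ×ℝ)))
      ∂(Measure.pi fun _ : Fin n =>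
          ENNReal.ofReal w • Measure.dirac ((a*q, 1) : ℝ×ℝ)
          + ENNReal.ofReal (1-w) • Measure.dirac ((q, 1) : ℝ×ℝ)))
      < ∫ S : Fin (n+1) → ℝ × ℝ, (∫ z, (z.1 * lrn (n+1) S - z.2) ^ 2
        ∂(ENNReal.ofReal w • Measure.dirac ((a*q, 1) : ℝ×ℝ)
          + ENNReal.ofReal (1-w) • Measure.dirac ((q, 1) : ℝ×ℝ)))
      ∂(Measure.pi fun _ : Fin (n+1) =>
          ENNReal.ofReal w • Measure.dirac ((a*q, 1) : ℝ×ℝ)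
          + ENNReal.ofReal (1-w) • Measure.dirac ((q, 1) : ℝ×ℝ))
    rw [hE1, hE2]
    have hcons : ∀ (b : Bool) (σ : Fin n → Bool),
        (∏ i : Fin (n+1), if (Fin.cons b σ : Fin (n+1) → Bool) i then w else 1-w)
          = (if b then w else 1-w) * ∏ i : Fin n, if σ i then w else 1-w := by
      intro b σ
      rw [Fin.prod_univ_succ]
      simp
    have hcnt : ∀ (b : Bool) (σ : Fin n → Bool),
        cnt (Fin.cons b σ : Fin (n+1) → Bool) = (if b then 1 else 0) + cnt σ := by
      intro b σ
      unfold cnt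
      rw [Fin.sum_univ_succ]
      simp
    have hreidx : (∑ σ : Fin (n+1) → Bool,
        (∏ i, if σ i then w else 1-w) * phi a w (↑(n+1)) (cnt σ))
      = ∑ σ : Fin n → Bool, ((∏ i, if σ i then w else 1-w) *
          (w * phi a w (x+1) ((cnt σ : ℝ)+1) + (1-w) * phi a w (x+1) (cnt σ))) := by
      rw [← Fintype.sum_equiv (Fin.consEquiv (fun _ : Fin (n+1) => Bool))
        (fun pr : Bool × (Fin n → Bool) =>
          (∏ i : Fin (n+1), if (Fin.cons pr.1 pr.2 : Fin (n+1) → Bool) i then w else 1-w)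
            * phi a w (↑(n+1)) (cnt (Fin.cons pr.1 pr.2 : Fin (n+1) → Bool)))
        (fun σ => (∏ i, if σ i then w else 1-w) * phi a w (↑(n+1)) (cnt σ))
        (fun pr => rfl)]
      rw [Fintype.sum_prod_type, Fintype.sum_bool, ← Finset.sum_add_distrib]
      apply Finset.sum_congr rfl
      intro σ _
      have hcntT : ((cnt (Fin.cons true σ : Fin (n+1) → Bool) : ℝ)) = (cnt σ : ℝ) + 1 := by
        rw [hcnt]
        norm_num
        push_cast
        ring
      have hcntF : ((cnt (Fin.cons false σ : Fin (n+1) → Bool) : ℝ)) = (cnt σ : ℝ) := by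
        rw [hcnt]
        norm_num
      have hc3 : ((↑(n+1) : ℝ)) = x + 1 := by push_cast; rfl
      have hwT : (if (true : Bool) = true then w else 1-w) = w := by norm_num
      have hwF : (if (false : Bool) = true then w else 1-w) = 1-w := by norm_num
      rw [hcons, hcons, hcntT, hcntF, hc3, hwT, hwF]
      ring
    rw [hreidx, ← sub_pos, ← Finset.sum_sub_distrib]
    -- now a single sum
    have hgform : ∀ σ : Fin n → Bool,
        (∏ i, if σ i then w else 1-w) *
          (w * phi a w (x+1) ((cnt σ : ℝ)+1) + (1-w) * phi a w (x+1) (cnt σ))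
        - (∏ i, if σ i then w else 1-w) * phi a w (↑n) (cnt σ)
        = (∏ i, if σ i then w else 1-w) *
          (w * phi a w (x+1) ((cnt σ : ℝ)+1) + (1-w) * phi a w (x+1) (cnt σ)
            - phi a w x (cnt σ)) := by
      intro σ
      ring
    rw [Finset.sum_congr rfl fun σ _ => hgform σ]
    -- notation
    set σ₀ : Fin n → Bool := fun _ => false with hσ₀
    have hW0 : (∏ i : Fin n, if σ₀ i then w else 1-w) = (1-w)^n := by
      simp [hσ₀, Finset.prod_const]
    have hcnt0 : ((cnt σ₀ : ℝ)) = 0 := by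
      simp [cnt, hσ₀]
    have hWnn : ∀ σ : Fin n → Bool, 0 ≤ ∏ i, if σ i then w else 1-w := by
      intro σ
      apply Finset.prod_nonneg
      intro i _
      split <;> linarith
    have hTotal : (∑ σ : Fin n → Bool, ∏ i, if σ i then w else 1-w) = 1 := by
      rw [← Fintype.prod_sum (fun (_ : Fin n) (b : Bool) => if b then w else 1-w)]
      have : ∀ i : Fin n, (∑ b : Bool, if b then w else 1-w) = 1 := by
        intro i
        rw [Fintype.sum_bool]
        simp
      rw [Finset.prod_congr rfl fun i _ => this i]
      simp
    -- split off σ₀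
    rw [← Finset.add_sum_erase _ _ (Finset.mem_univ σ₀)]
    have hP1 : 1 - x*w ≤ (1-w)^n := by
      have h := one_add_mul_le_pow (by linarith : (-2:ℝ) ≤ -w) n
      rw [show ((1:ℝ) + -w) = 1 - w by ring] at h
      rw [show ((1:ℝ) + ↑n * -w) = 1 - x*w by rw [hxdef]; ring] at h
      exact h
    have hP2 : (1-w)^n ≤ 1 := by
      apply pow_le_one₀ (by linarith) (by linarith)
    -- gain at σ₀
    have hgain : w * phi a w (x+1) ((cnt σ₀ : ℝ)+1) + (1-w) * phi a w (x+1) (cnt σ₀)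
        - phi a w x (cnt σ₀)
        ≥ w * ((1-w)*(a-1)^2*a^2/(a^2+x)^2 - w*(a-1)^2) := by
      rw [hcnt0]
      rw [show (0:ℝ)+1 = 1 by ring]
      exact gain_bound ha3 hwpos hwhalf hx
    have hfn := final_numeric (P := (1-w)^n) hx hwdef hP1 hP2
    rw [← hadef] at hfn
    have hDnn : 0 ≤ 3*(a-1)^2/a^4 + w*(w*(a-1)^2+1) := by
      have h1 : (0:ℝ) < a^4 := by positivity
      have h2 : (0:ℝ) ≤ 3*(a-1)^2/a^4 := div_nonneg (by positivity) h1.le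
      nlinarith [mul_nonneg hwpos.le (sq_nonneg (a-1)), hwpos.le,
        mul_nonneg hwpos.le (add_nonneg (mul_nonneg hwpos.le (sq_nonneg (a-1))) zero_le_one)]
    have hPpos : 0 < (1-w)^n := pow_pos (by linarith) n
    have hγpos : 0 < w * ((1-w)*(a-1)^2*a^2/(a^2+x)^2 - w*(a-1)^2) := by
      by_contra hcon
      push_neg at hcon
      nlinarith [mul_nonneg (sub_nonneg.mpr hP2) hDnn,
        mul_nonpos_of_nonneg_of_nonpos hPpos.le hcon]
    -- erase-sum bound
    have hbound : ∀ σ ∈ Finset.univ.erase σ₀,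
        (∏ i, if σ i then w else 1-w) * (-(3*(a-1)^2/a^4 + w*(w*(a-1)^2+1)))
        ≤ (∏ i, if σ i then w else 1-w) *
          (w * phi a w (x+1) ((cnt σ : ℝ)+1) + (1-w) * phi a w (x+1) (cnt σ)
            - phi a w x (cnt σ)) := by
      intro σ hσ
      have hne : σ ≠ σ₀ := (Finset.mem_erase.mp hσ).1
      have hk1 : (1:ℝ) ≤ (cnt σ : ℝ) := by exact_mod_cast cnt_pos hne
      have hkx : ((cnt σ : ℝ)) ≤ x := by rw [hxdef]; exact_mod_cast cnt_le σ
      have hxa : x ≤ a := by rw [hadef]; linarith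
      exact mul_le_mul_of_nonneg_left
        (deficit_bound ha3 hwpos hwhalf hk1 hkx hxa) (hWnn σ)
    have hsum2 := Finset.sum_le_sum hbound
    have hWerase : (∑ σ ∈ Finset.univ.erase σ₀, ∏ i, if σ i then w else 1-w)
        = 1 - (1-w)^n := by
      have h := Finset.add_sum_erase Finset.univ
        (fun σ : Fin n → Bool => ∏ i, if σ i then w else 1-w) (Finset.mem_univ σ₀)
      rw [hW0, hTotal] at h
      linarith
    have hsum3 : (∑ σ ∈ Finset.univ.erase σ₀,
        (∏ i, if σ i then w else 1-w) * (-(3*(a-1)^2/a^4 + w*(w*(a-1)^2+1))))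
        = -((1 - (1-w)^n) * (3*(a-1)^2/a^4 + w*(w*(a-1)^2+1))) := by
      rw [← Finset.sum_mul, hWerase]
      ring
    have hterm0 : (1-w)^n * (w * ((1-w)*(a-1)^2*a^2/(a^2+x)^2 - w*(a-1)^2))
        ≤ (∏ i, if σ₀ i then w else 1-w) *
          (w * phi a w (x+1) ((cnt σ₀ : ℝ)+1) + (1-w) * phi a w (x+1) (cnt σ₀)
            - phi a w x (cnt σ₀)) := by
      rw [hW0]
      exact mul_le_mul_of_nonneg_left hgain hPpos.le
    rw [hsum3] at hsum2
    linarith [hsum2, hterm0, hfn]
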